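/- If a random vector X is negatively orthant dependent, then its checkerboard copula C⊥ is negatively orthant dependent, i.e., the random vector U = (U₁,…,U_d) defined by Uᵢ = Fᵢ(Xᵢ-) + Vᵢ(Fᵢ(Xᵢ) − Fᵢ(Xᵢ-)) with V ~ U([0,1]^d) independent of X satisfies P(U ≤ t) ≤ ∏ᵢ P(Uᵢ ≤ tᵢ) and P(U > t) ≤ ∏ᵢ P(Uᵢ > tᵢ) for all t ∈ ℝ^d. -/

import Mathlib

open MeasureTheory ProbabilityTheory Filter Set Topology

/-- Negative orthant dependence (NOD). -/
def IsNOD {Ω : Type*} [MeasurableSpace Ω] (P : Measure Ω) {d : ℕ}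
    (X : Fin d → Ω → ℝ) : Prop :=
  ∀ x : Fin d → ℝ,
    P {ω | ∀ i, X i ω ≤ x i} ≤ ∏ i, P {ω | X i ω ≤ x i} ∧
    P {ω | ∀ i, x i < X i ω} ≤ ∏ i, P {ω | x i < X i ω}

namespace NODaux

set_option linter.unusedSectionVars false
set_option linter.unusedVariables false


lemma lintegral_pi_prod : ∀ (n : ℕ) (m : Fin n → Measure ℝ),
    (∀ i, SigmaFinite (m i)) → ∀ (f : Fin n → ℝ → ENNReal), (∀ i, Measurable (f i)) →
    ∫⁻ v, ∏ i, f i (v i) ∂(Measure.pi m) = ∏ i, ∫⁻ w, f i w ∂(m i) := by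
  intro n
  induction n with
  | zero =>
    intro m _ f _
    simp [lintegral_const, Measure.pi_empty_univ]
  | succ n ih =>
    intro m hsf f hf
    haveI := hsf
    have hmp := measurePreserving_piFinSuccAbove m 0
    have hmeas : Measurable (fun z : ℝ × (Fin n → ℝ) => f 0 z.1 * ∏ j, f (Fin.succ j) (z.2 j)) := by
      apply Measurable.mul
      · exact (hf 0).comp measurable_fst
      · exact Finset.measurable_prod _ fun (j : Fin n) _ =>
          (hf j.succ).comp ((measurable_pi_apply j).comp measurable_snd)
    have key := hmp.lintegral_comp (f := fun z : ℝ × (Fin n → ℝ) => f 0 z.1 * ∏ j, f (Fin.succ j) (z.2 j)) hmeas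
    have h1 : ∀ x : Fin (n+1) → ℝ,
        f 0 ((MeasurableEquiv.piFinSuccAbove (fun _ => ℝ) 0 x).1) *
          ∏ j, f (Fin.succ j) ((MeasurableEquiv.piFinSuccAbove (fun _ => ℝ) 0 x).2 j)
        = ∏ i, f i (x i) := by
      intro x
      rw [Fin.prod_univ_succ]
      congr 1
    simp_rw [h1] at key
    rw [key, lintegral_prod_mul (f := f 0) (g := fun y : Fin n → ℝ => ∏ j, f (Fin.succ j) (y j))
        (hf 0).aemeasurable
        (Finset.measurable_prod Finset.univ (fun (j : Fin n) _ =>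
          (hf j.succ).comp (measurable_pi_apply j))).aemeasurable,
      ih _ (fun j => hsf _) _ (fun j => hf j.succ), Fin.prod_univ_succ]
    rfl


lemma lintegral_pi_eval {n : ℕ} (m : Fin n → Measure ℝ) [∀ i, IsProbabilityMeasure (m i)]
    (i : Fin n) (f : ℝ → ENNReal) (hf : Measurable f) :
    ∫⁻ v, f (v i) ∂(Measure.pi m) = ∫⁻ w, f w ∂(m i) := by
  classical
  have h := lintegral_pi_prod n m (fun j => inferInstance) (fun j => if j = i then f else fun _ => 1)
    (fun j => by by_cases h : j = i <;> simp [h, hf, measurable_const])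
  have h1 : ∀ v : Fin n → ℝ, ∏ j, (if j = i then f else fun _ => 1) (v j) = f (v i) := by
    intro v
    rw [Finset.prod_eq_single i]
    · simp
    · intro b _ hb; simp [hb]
    · simp
  simp_rw [h1] at h
  rw [h, Finset.prod_eq_single i]
  · simp
  · intro b _ hb
    simp [hb, lintegral_one]
  · simp

lemma cube_eq_pi (d : ℕ) :
    (volume : Measure (Fin d → ℝ)).restrict (Set.univ.pi fun _ => Set.Icc (0:ℝ) 1)
      = Measure.pi (fun _ : Fin d => volume.restrict (Set.Icc (0:ℝ) 1)) := by
  refine (Measure.pi_eq fun s hs => ?_).symm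
  rw [Measure.restrict_apply (MeasurableSet.univ_pi hs), ← Set.pi_inter_distrib, volume_pi_pi]
  exact Finset.prod_congr rfl fun i _ => (Measure.restrict_apply (hs i)).symm

lemma lowerSeq {s : Set ℝ} (hs : IsLowerSet s) (hne : s.Nonempty) :
    ∃ a : ℕ → ℝ, Monotone a ∧ (∀ n, a n ∈ s) ∧ ∀ x ∈ s, ∃ n, x ≤ a n := by
  by_cases hb : BddAbove s
  · by_cases hcs : sSup s ∈ s
    · exact ⟨fun _ => sSup s, monotone_const, fun _ => hcs, fun x hx => ⟨0, le_csSup hb hx⟩⟩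
    · have hy : ∀ n : ℕ, ∃ y ∈ s, sSup s - 1/(n+1) < y := by
        intro n
        apply exists_lt_of_lt_csSup hne
        have : (0:ℝ) < 1/(n+1) := by positivity
        linarith
      choose y hy1 hy2 using hy
      refine ⟨fun n => (Finset.range (n+1)).sup' (by simp) y, ?_, ?_, ?_⟩
      · intro a b hab
        apply Finset.sup'_le
        intro k hk
        exact Finset.le_sup' y (Finset.mem_range.2 (lt_of_lt_of_le (Finset.mem_range.1 hk)
          (by omega)))
      · intro n
        obtain ⟨k, _, hk⟩ := Finset.exists_mem_eq_sup' (s := Finset.range (n+1)) (by simp) y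
        have := hy1 k; rwa [← hk] at this
      · intro x hx
        have hxc : x < sSup s := by
          rcases lt_or_eq_of_le (le_csSup hb hx) with h | h
          · exact h
          · exact absurd (h ▸ hx) hcs
        obtain ⟨n, hn⟩ := exists_nat_one_div_lt (sub_pos.2 hxc)
        refine ⟨n, le_trans ?_ (Finset.le_sup' y (Finset.mem_range.2 (Nat.lt_succ_self n)))⟩
        have := hy2 n
        push_cast at this hn ⊢
        linarith
  · have hy : ∀ n : ℕ, ∃ y ∈ s, (n:ℝ) < y := by
      intro n
      by_contra h
      push_neg at h
      exact hb ⟨n, fun z hz => h z hz⟩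
    choose y hy1 hy2 using hy
    refine ⟨fun n => (Finset.range (n+1)).sup' (by simp) y, ?_, ?_, ?_⟩
    · intro a b hab
      apply Finset.sup'_le
      intro k hk
      exact Finset.le_sup' y (Finset.mem_range.2 (lt_of_lt_of_le (Finset.mem_range.1 hk) (by omega)))
    · intro n
      obtain ⟨k, _, hk⟩ := Finset.exists_mem_eq_sup' (s := Finset.range (n+1)) (by simp) y
      have := hy1 k; rwa [← hk] at this
    · intro x hx
      obtain ⟨n, hn⟩ := exists_nat_gt x
      refine ⟨n, le_trans ?_ (Finset.le_sup' y (Finset.mem_range.2 (Nat.lt_succ_self n)))⟩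
      exact le_trans hn.le (hy2 n).le

lemma upperSeq {s : Set ℝ} (hs : IsUpperSet s) (hne : s ≠ univ) :
    ∃ a : ℕ → ℝ, Monotone a ∧ (∀ n, ∀ x ∈ s, a n < x) ∧ ∀ x, x ∉ s → ∃ n, x ≤ a n := by
  obtain ⟨a, ha1, ha2, ha3⟩ := lowerSeq hs.compl
    (Set.nonempty_compl.2 hne)
  refine ⟨a, ha1, fun n x hx => ?_, fun x hx => ha3 x hx⟩
  by_contra h
  push_neg at h
  exact ha2 n (hs h hx)

section
variable {Ω : Type*} [MeasurableSpace Ω] (P : Measure Ω) [IsProbabilityMeasure P] {d : ℕ}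
  (X : Fin d → Ω → ℝ)

lemma nod_lower (hNOD : IsNOD P X) (s : Fin d → Set ℝ)
    (hls : ∀ i, IsLowerSet (s i)) :
    P {ω | ∀ i, X i ω ∈ s i} ≤ ∏ i, P {ω | X i ω ∈ s i} := by
  by_cases hne : ∀ i, (s i).Nonempty
  · choose a ham has hax using fun i => lowerSeq (hls i) (hne i)
    have hmono : Monotone (fun n => {ω | ∀ i, X i ω ≤ a i n}) := by
      intro nm n hnm ω hω i
      exact le_trans (hω i) (ham i hnm)
    have hun : {ω | ∀ i, X i ω ∈ s i} = ⋃ n, {ω | ∀ i, X i ω ≤ a i n} := by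
      ext ω
      simp only [mem_setOf_eq, mem_iUnion]
      constructor
      · intro hω
        choose g hg using fun i => hax i _ (hω i)
        exact ⟨Finset.univ.sup g, fun i =>
          le_trans (hg i) (ham i (Finset.le_sup (Finset.mem_univ i)))⟩
      · rintro ⟨n, hn⟩ i
        exact hls i (hn i) (has i n)
    rw [hun, Monotone.measure_iUnion hmono]
    refine iSup_le fun n => le_trans (hNOD (fun i => a i n)).1 ?_
    exact Finset.prod_le_prod' fun i _ => measure_mono fun ω hω => hls i hω (has i n)
  · push_neg at hne
    obtain ⟨i, hi⟩ := hne

    have h0 : P {ω | ∀ i, X i ω ∈ s i} = 0 := by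
      have : {ω | ∀ i, X i ω ∈ s i} = ∅ := by
        ext ω
        simp only [mem_setOf_eq, mem_empty_iff_false, iff_false, not_forall]
        exact ⟨i, by simp [hi]⟩
      simp [this]
    simp [h0]

lemma nod_upper_finset (hNOD : IsNOD P X) (c : Fin d → ℝ) (B : Finset (Fin d)) :
    P {ω | ∀ i ∈ B, c i < X i ω} ≤ ∏ i ∈ B, P {ω | c i < X i ω} := by
  classical
  set x : ℕ → Fin d → ℝ := fun n i => if i ∈ B then c i else -(n:ℝ) with hx
  have hmono : Monotone (fun n => {ω | ∀ i, x n i < X i ω}) := by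
    intro nm n hnm ω hω i
    refine lt_of_le_of_lt ?_ (hω i)
    by_cases hiB : i ∈ B <;> simp [hx, hiB]
    exact_mod_cast hnm
  have hun : {ω | ∀ i ∈ B, c i < X i ω} = ⋃ n, {ω | ∀ i, x n i < X i ω} := by
    ext ω
    simp only [mem_setOf_eq, mem_iUnion]
    constructor
    · intro hω
      choose g hg using fun i => exists_nat_gt (-(X i ω))
      refine ⟨Finset.univ.sup g, fun i => ?_⟩
      by_cases hiB : i ∈ B
      · simpa [hx, hiB] using hω i hiB
      · simp only [hx, hiB, if_false]
        have h1 : (g i : ℝ) ≤ (Finset.univ.sup g : ℕ) := by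
          exact_mod_cast Nat.cast_le.2 (Finset.le_sup (Finset.mem_univ i))
        have := hg i
        linarith
    · rintro ⟨n, hn⟩ i hiB
      simpa [hx, hiB] using hn i
  rw [hun, Monotone.measure_iUnion hmono]
  refine iSup_le fun n => le_trans (hNOD (x n)).2 ?_
  rw [← Finset.prod_mul_prod_compl B]
  have h1 : ∏ i ∈ B, P {ω | x n i < X i ω} = ∏ i ∈ B, P {ω | c i < X i ω} :=
    Finset.prod_congr rfl fun i hiB => by simp [hx, hiB]
  have h2 : ∏ i ∈ Bᶜ, P {ω | x n i < X i ω} ≤ 1 :=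
    Finset.prod_le_one (fun _ _ => zero_le) (fun i _ => prob_le_one)
  calc (∏ i ∈ B, P {ω | x n i < X i ω}) * ∏ i ∈ Bᶜ, P {ω | x n i < X i ω}
      ≤ (∏ i ∈ B, P {ω | x n i < X i ω}) * 1 := mul_le_mul_right h2 _
    _ = ∏ i ∈ B, P {ω | c i < X i ω} := by rw [mul_one, h1]

lemma nod_upper (hXm : ∀ i, Measurable (X i)) (hNOD : IsNOD P X) (s : Fin d → Set ℝ)
    (hus : ∀ i, IsUpperSet (s i)) :
    P {ω | ∀ i, X i ω ∈ s i} ≤ ∏ i, P {ω | X i ω ∈ s i} := by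
  classical
  by_cases hne : ∀ i, (s i).Nonempty
  · have hseq : ∀ i, ∃ a : ℕ → ℝ, Monotone a ∧ (s i ≠ univ →
        ((∀ n, ∀ x ∈ s i, a n < x) ∧ (∀ x, x ∉ s i → ∃ n, x ≤ a n))) := by
      intro i
      by_cases h : s i = univ
      · exact ⟨fun _ => 0, monotone_const, fun h' => absurd h h'⟩
      · obtain ⟨a, h1, h2, h3⟩ := upperSeq (hus i) h
        exact ⟨a, h1, fun _ => ⟨h2, h3⟩⟩
    choose a ham ha using hseq
    set B : Finset (Fin d) := Finset.univ.filter (fun i => s i ≠ univ) with hB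
    have key : ∀ m : ℕ, P {ω | ∀ i, X i ω ∈ s i} ≤ ∏ i ∈ B, P {ω | a i m < X i ω} := by
      intro m
      refine le_trans (measure_mono ?_) (nod_upper_finset P X hNOD (fun i => a i m) B)
      intro ω hω i hiB
      have hsi : s i ≠ univ := by simpa [hB] using hiB
      exact (ha i hsi).1 m _ (hω i)
    have hlim : ∀ i ∈ B, Tendsto (fun m => P {ω | a i m < X i ω}) atTop
        (𝓝 (P {ω | X i ω ∈ s i})) := by
      intro i hiB
      have hsi : s i ≠ univ := by simpa [hB] using hiB
      have hinter : ⋂ m, {ω | a i m < X i ω} = {ω | X i ω ∈ s i} := by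
        ext ω
        simp only [mem_iInter, mem_setOf_eq]
        constructor
        · intro h
          by_contra hns
          obtain ⟨m, hm⟩ := (ha i hsi).2 _ hns
          exact absurd (h m) (not_lt.2 hm)
        · intro h m
          exact (ha i hsi).1 m _ h
      rw [← hinter]
      apply tendsto_measure_iInter_atTop
      · exact fun m => (measurableSet_lt measurable_const (hXm i)).nullMeasurableSet
      · intro mm m hm ω hω
        exact lt_of_le_of_lt (ham i hm) hω
      · exact ⟨0, measure_ne_top P _⟩
    have htendsto := ENNReal.tendsto_finset_prod_of_ne_top B hlim
      (fun i _ => measure_ne_top P _)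
    have hle : P {ω | ∀ i, X i ω ∈ s i} ≤ ∏ i ∈ B, P {ω | X i ω ∈ s i} :=
      ge_of_tendsto' htendsto key
    refine le_trans hle ?_
    rw [← Finset.prod_mul_prod_compl B (fun i => P {ω | X i ω ∈ s i})]
    have h2 : ∏ i ∈ Bᶜ, P {ω | X i ω ∈ s i} = 1 := by
      refine Finset.prod_eq_one fun i hiB => ?_
      have : s i = univ := by simpa [hB] using hiB
      simp [this]
    rw [h2, mul_one]
  · push_neg at hne
    obtain ⟨i, hi⟩ := hne

    have h0 : {ω | ∀ i, X i ω ∈ s i} = ∅ := by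
      ext ω
      simp only [mem_setOf_eq, mem_empty_iff_false, iff_false, not_forall]
      exact ⟨i, by simp [hi]⟩
    simp [h0]

end

end NODaux
theorem stmt12 {Ω : Type*} [MeasurableSpace Ω] (P : Measure Ω) [IsProbabilityMeasure P]
    {d : ℕ} (X V : Fin d → Ω → ℝ)
    (hXm : ∀ i, Measurable (X i)) (hVm : ∀ i, Measurable (V i))
    (hV : Measure.map (fun ω i => V i ω) P
        = (volume : Measure (Fin d → ℝ)).restrict (Set.univ.pi fun _ => Set.Icc (0:ℝ) 1))
    (hindep : IndepFun (fun ω i => X i ω) (fun ω i => V i ω) P)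
    (F Fm : Fin d → ℝ → ℝ)
    (hF : ∀ i x, F i x = (P {ω | X i ω ≤ x}).toReal)
    (hFm : ∀ i x, Fm i x = (P {ω | X i ω < x}).toReal)
    (U : Fin d → Ω → ℝ)
    (hU : ∀ i ω, U i ω = Fm i (X i ω) + V i ω * (F i (X i ω) - Fm i (X i ω)))
    (hNOD : IsNOD P X) :
    ∀ t : Fin d → ℝ,
      P {ω | ∀ i, U i ω ≤ t i} ≤ ∏ i, P {ω | U i ω ≤ t i} ∧
      P {ω | ∀ i, t i < U i ω} ≤ ∏ i, P {ω | t i < U i ω} := by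
  classical
  intro t
  set Xv : Ω → (Fin d → ℝ) := fun ω i => X i ω with hXv
  set Vv : Ω → (Fin d → ℝ) := fun ω i => V i ω with hVv
  have hXvm : Measurable Xv := measurable_pi_lambda _ hXm
  have hVvm : Measurable Vv := measurable_pi_lambda _ hVm
  set μ : Measure (Fin d → ℝ) := P.map Xv with hμ
  set ν : Measure (Fin d → ℝ) := P.map Vv with hνdef
  set m : Fin d → Measure ℝ := fun _ => volume.restrict (Set.Icc (0:ℝ) 1) with hm
  haveI hmprob : ∀ i : Fin d, IsProbabilityMeasure (m i) := by
    intro i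
    constructor
    rw [hm]
    simp [Real.volume_Icc]
  haveI : IsProbabilityMeasure μ := Measure.isProbabilityMeasure_map hXvm.aemeasurable
  haveI : IsProbabilityMeasure ν := Measure.isProbabilityMeasure_map hVvm.aemeasurable
  have hν : ν = Measure.pi m := by
    rw [hV]
    exact NODaux.cube_eq_pi d
  have hmap : P.map (fun ω => (Xv ω, Vv ω)) = μ.prod ν :=
    (indepFun_iff_map_prod_eq_prod_map_map hXvm.aemeasurable hVvm.aemeasurable).mp hindep
  -- monotonicity and measurability of F, Fm
  have hFmono : ∀ i, Monotone (F i) := by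
    intro i x y hxy
    rw [hF, hF]
    exact ENNReal.toReal_mono (measure_ne_top _ _)
      (measure_mono fun ω h => le_trans h hxy)
  have hFmmono : ∀ i, Monotone (Fm i) := by
    intro i x y hxy
    rw [hFm, hFm]
    exact ENNReal.toReal_mono (measure_ne_top _ _)
      (measure_mono fun ω h => lt_of_lt_of_le h hxy)
  have hFmeas : ∀ i, Measurable (F i) := fun i => (hFmono i).measurable
  have hFmmeas : ∀ i, Measurable (Fm i) := fun i => (hFmmono i).measurable
  have hΔ : ∀ i x, Fm i x ≤ F i x := by
    intro i x
    rw [hF, hFm]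
    refine ENNReal.toReal_mono (measure_ne_top _ _) (measure_mono ?_)
    intro ω h
    simp only [Set.mem_setOf_eq] at h ⊢
    exact le_of_lt h
  set g : Fin d → ℝ → ℝ → ℝ := fun i v x => Fm i x + v * (F i x - Fm i x) with hg
  have hgc : ∀ i c, Measurable (fun y : ℝ => g i c y) := by
    intro i c
    exact (hFmmeas i).add (measurable_const.mul ((hFmeas i).sub (hFmmeas i)))
  have hgm : ∀ i, Measurable (fun p : (Fin d → ℝ) × (Fin d → ℝ) => g i (p.2 i) (p.1 i)) := by
    intro i
    apply Measurable.add
    · exact (hFmmeas i).comp ((measurable_pi_apply i).comp measurable_fst)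
    · exact ((measurable_pi_apply i).comp measurable_snd).mul
        (((hFmeas i).comp ((measurable_pi_apply i).comp measurable_fst)).sub
         ((hFmmeas i).comp ((measurable_pi_apply i).comp measurable_fst)))
  have hgmono : ∀ i v, v ∈ Set.Icc (0:ℝ) 1 → Monotone (g i v) := by
    intro i v hv x y hxy
    have h1 := hFmono i hxy
    have h2 := hFmmono i hxy
    have e1 : 0 ≤ (1 - v) * (Fm i y - Fm i x) :=
      mul_nonneg (by linarith [hv.2]) (by linarith)
    have e2 : 0 ≤ v * (F i y - F i x) := mul_nonneg hv.1 (by linarith)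
    simp only [hg]
    nlinarith [e1, e2]
  have hgv : ∀ i x, Monotone (fun v => g i v x) := by
    intro i x v w hvw
    have h1 := mul_le_mul_of_nonneg_right hvw (sub_nonneg.2 (hΔ i x))
    simp only [hg]
    linarith
  constructor
  · -- lower orthant
    set S : Set ((Fin d → ℝ) × (Fin d → ℝ)) := {p | ∀ i, g i (p.2 i) (p.1 i) ≤ t i} with hSdef
    have hS : MeasurableSet S := by
      have : S = ⋂ i, {p : (Fin d → ℝ) × (Fin d → ℝ) | g i (p.2 i) (p.1 i) ≤ t i} := by
        ext p; simp [hSdef, mem_iInter]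
      rw [this]
      exact MeasurableSet.iInter fun i => measurableSet_le (hgm i) measurable_const
    have hev : {ω | ∀ i, U i ω ≤ t i} = (fun ω => (Xv ω, Vv ω)) ⁻¹' S := by
      ext ω
      simp only [mem_setOf_eq, mem_preimage, hSdef]
      exact forall_congr' fun i => by rw [hU i ω]
    set f : Fin d → ℝ → ENNReal := fun i w => P {ω | g i w (X i ω) ≤ t i} with hfdef
    have hfanti : ∀ i, Antitone (f i) := by
      intro i v w hvw
      exact measure_mono fun ω hω => le_trans (hgv i (X i ω) hvw) hω
    have hfm : ∀ i, Measurable (f i) := fun i => (hfanti i).measurable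
    have hsm : ∀ (i : Fin d) (c : ℝ), MeasurableSet {x : Fin d → ℝ | g i c (x i) ≤ t i} :=
      fun i c => measurableSet_le ((hgc i c).comp (measurable_pi_apply i)) measurable_const
    have hslice : ∀ (i : Fin d) (c : ℝ), μ {x : Fin d → ℝ | g i c (x i) ≤ t i} = f i c := by
      intro i c
      rw [hμ, Measure.map_apply hXvm (hsm i c)]
      rfl
    have hsliceall : ∀ v : Fin d → ℝ, (∀ i, v i ∈ Set.Icc (0:ℝ) 1) →
        μ {x : Fin d → ℝ | ∀ i, g i (v i) (x i) ≤ t i} ≤ ∏ i, f i (v i) := by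
      intro v hv
      have hms : MeasurableSet {x : Fin d → ℝ | ∀ i, g i (v i) (x i) ≤ t i} := by
        have : {x : Fin d → ℝ | ∀ i, g i (v i) (x i) ≤ t i}
            = ⋂ i, {x : Fin d → ℝ | g i (v i) (x i) ≤ t i} := by
          ext x; simp [mem_iInter]
        rw [this]
        exact MeasurableSet.iInter fun i => hsm i (v i)
      rw [hμ, Measure.map_apply hXvm hms]
      have := NODaux.nod_lower P X hNOD (fun i => {x : ℝ | g i (v i) x ≤ t i})
        (fun i a b hba ha => le_trans (hgmono i (v i) (hv i) hba) ha)
      exact this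
    have haecube : ∀ᵐ v ∂ν, ∀ i, v i ∈ Set.Icc (0:ℝ) 1 := by
      rw [ae_iff]
      have hce : {v : Fin d → ℝ | ¬ ∀ i, v i ∈ Set.Icc (0:ℝ) 1}
          = (Set.univ.pi fun _ => Set.Icc (0:ℝ) 1)ᶜ := by
        ext v
        simp only [Set.mem_setOf_eq, Set.mem_compl_iff, Set.mem_pi, Set.mem_univ, true_implies]
      rw [hce, hV, Measure.restrict_apply
        (MeasurableSet.univ_pi fun _ => measurableSet_Icc).compl]
      simp
    calc P {ω | ∀ i, U i ω ≤ t i} = (μ.prod ν) S := by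
          rw [hev, ← hmap, Measure.map_apply (hXvm.prodMk hVvm) hS]
      _ = ∫⁻ v, μ ((fun x => (x, v)) ⁻¹' S) ∂ν := Measure.prod_apply_symm hS
      _ ≤ ∫⁻ v, ∏ i, f i (v i) ∂ν := by
          refine lintegral_mono_ae ?_
          filter_upwards [haecube] with v hv
          exact hsliceall v hv
      _ = ∏ i, ∫⁻ w, f i w ∂(m i) := by
          rw [hν]
          exact NODaux.lintegral_pi_prod d m (fun i => inferInstance) f hfm
      _ = ∏ i, P {ω | U i ω ≤ t i} := by
          refine Finset.prod_congr rfl fun i _ => ?_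
          have hSi : MeasurableSet {p : (Fin d → ℝ) × (Fin d → ℝ) | g i (p.2 i) (p.1 i) ≤ t i} :=
            measurableSet_le (hgm i) measurable_const
          have hev_i : {ω | U i ω ≤ t i}
              = (fun ω => (Xv ω, Vv ω)) ⁻¹' {p : (Fin d → ℝ) × (Fin d → ℝ) | g i (p.2 i) (p.1 i) ≤ t i} := by
            ext ω
            simp only [mem_setOf_eq, mem_preimage]
            rw [hU i ω]
          rw [hev_i, ← Measure.map_apply (hXvm.prodMk hVvm) hSi, hmap,
            Measure.prod_apply_symm hSi]
          have hsl : ∀ y : Fin d → ℝ,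
              μ ((fun x => (x, y)) ⁻¹' {p : (Fin d → ℝ) × (Fin d → ℝ) | g i (p.2 i) (p.1 i) ≤ t i})
                = f i (y i) := fun y => hslice i (y i)
          simp_rw [hsl]
          rw [hν]
          exact (@NODaux.lintegral_pi_eval d m hmprob i (f i) (hfm i)).symm
  · -- upper orthant
    set S : Set ((Fin d → ℝ) × (Fin d → ℝ)) := {p | ∀ i, t i < g i (p.2 i) (p.1 i)} with hSdef
    have hS : MeasurableSet S := by
      have : S = ⋂ i, {p : (Fin d → ℝ) × (Fin d → ℝ) | t i < g i (p.2 i) (p.1 i)} := by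
        ext p; simp [hSdef, mem_iInter]
      rw [this]
      exact MeasurableSet.iInter fun i => measurableSet_lt measurable_const (hgm i)
    have hev : {ω | ∀ i, t i < U i ω} = (fun ω => (Xv ω, Vv ω)) ⁻¹' S := by
      ext ω
      simp only [mem_setOf_eq, mem_preimage, hSdef]
      exact forall_congr' fun i => by rw [hU i ω]
    set f : Fin d → ℝ → ENNReal := fun i w => P {ω | t i < g i w (X i ω)} with hfdef
    have hfmono : ∀ i, Monotone (f i) := by
      intro i v w hvw
      exact measure_mono fun ω hω => lt_of_lt_of_le hω (hgv i (X i ω) hvw)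
    have hfm : ∀ i, Measurable (f i) := fun i => (hfmono i).measurable
    have hsm : ∀ (i : Fin d) (c : ℝ), MeasurableSet {x : Fin d → ℝ | t i < g i c (x i)} :=
      fun i c => measurableSet_lt measurable_const ((hgc i c).comp (measurable_pi_apply i))
    have hslice : ∀ (i : Fin d) (c : ℝ), μ {x : Fin d → ℝ | t i < g i c (x i)} = f i c := by
      intro i c
      rw [hμ, Measure.map_apply hXvm (hsm i c)]
      rfl
    have hsliceall : ∀ v : Fin d → ℝ, (∀ i, v i ∈ Set.Icc (0:ℝ) 1) →
        μ {x : Fin d → ℝ | ∀ i, t i < g i (v i) (x i)} ≤ ∏ i, f i (v i) := by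
      intro v hv
      have hms : MeasurableSet {x : Fin d → ℝ | ∀ i, t i < g i (v i) (x i)} := by
        have : {x : Fin d → ℝ | ∀ i, t i < g i (v i) (x i)}
            = ⋂ i, {x : Fin d → ℝ | t i < g i (v i) (x i)} := by
          ext x; simp [mem_iInter]
        rw [this]
        exact MeasurableSet.iInter fun i => hsm i (v i)
      rw [hμ, Measure.map_apply hXvm hms]
      have := NODaux.nod_upper P X hXm hNOD (fun i => {x : ℝ | t i < g i (v i) x})
        (fun i a b hab ha => lt_of_lt_of_le ha (hgmono i (v i) (hv i) hab))
      exact this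
    have haecube : ∀ᵐ v ∂ν, ∀ i, v i ∈ Set.Icc (0:ℝ) 1 := by
      rw [ae_iff]
      have hce : {v : Fin d → ℝ | ¬ ∀ i, v i ∈ Set.Icc (0:ℝ) 1}
          = (Set.univ.pi fun _ => Set.Icc (0:ℝ) 1)ᶜ := by
        ext v
        simp only [Set.mem_setOf_eq, Set.mem_compl_iff, Set.mem_pi, Set.mem_univ, true_implies]
      rw [hce, hV, Measure.restrict_apply
        (MeasurableSet.univ_pi fun _ => measurableSet_Icc).compl]
      simp
    calc P {ω | ∀ i, t i < U i ω} = (μ.prod ν) S := by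
          rw [hev, ← hmap, Measure.map_apply (hXvm.prodMk hVvm) hS]
      _ = ∫⁻ v, μ ((fun x => (x, v)) ⁻¹' S) ∂ν := Measure.prod_apply_symm hS
      _ ≤ ∫⁻ v, ∏ i, f i (v i) ∂ν := by
          refine lintegral_mono_ae ?_
          filter_upwards [haecube] with v hv
          exact hsliceall v hv
      _ = ∏ i, ∫⁻ w, f i w ∂(m i) := by
          rw [hν]
          exact NODaux.lintegral_pi_prod d m (fun i => inferInstance) f hfm
      _ = ∏ i, P {ω | t i < U i ω} := by
          refine Finset.prod_congr rfl fun i _ => ?_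
          have hSi : MeasurableSet {p : (Fin d → ℝ) × (Fin d → ℝ) | t i < g i (p.2 i) (p.1 i)} :=
            measurableSet_lt measurable_const (hgm i)
          have hev_i : {ω | t i < U i ω}
              = (fun ω => (Xv ω, Vv ω)) ⁻¹' {p : (Fin d → ℝ) × (Fin d → ℝ) | t i < g i (p.2 i) (p.1 i)} := by
            ext ω
            simp only [mem_setOf_eq, mem_preimage]
            rw [hU i ω]
          rw [hev_i, ← Measure.map_apply (hXvm.prodMk hVvm) hSi, hmap,
            Measure.prod_apply_symm hSi]
          have hsl : ∀ y : Fin d → ℝ,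
              μ ((fun x => (x, y)) ⁻¹' {p : (Fin d → ℝ) × (Fin d → ℝ) | t i < g i (p.2 i) (p.1 i)})
                = f i (y i) := fun y => hslice i (y i)
          simp_rw [hsl]
          rw [hν]
          exact (@NODaux.lintegral_pi_eval d m hmprob i (f i) (hfm i)).symm
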